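/- Let Γ be the graph of Proposition 1.8 (center clique [n], peripheral vertices n+1,…,M=2(n+m) each connected to all of [n], plus the extra peripheral edges (2k−1,2k) for k > n), with δ < 1/6 and m = ⌊δn/2⌋. Then for κ = δ/8 and every set J ⊆ [M] with |J| ≤ M/2, one has |∂(J)| − (1−δ)|Con(J)| ≥ κ|J|. -/

import Mathlib

/-- The graph of Proposition 1.8: on M = 2(m+n) vertices (0-indexed), vertices
0,…,n−1 form a clique (the center), every vertex ≥ n is connected to all center
vertices, and additionally the peripheral pairs (2j, 2j+1) for j ≥ n are connected. -/
def periGraph (n m : ℕ) : SimpleGraph (Fin (2 * (m + n))) where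
  Adj v w := v ≠ w ∧ (v.1 < n ∨ w.1 < n ∨
    (2 * n ≤ v.1 ∧ 2 * n ≤ w.1 ∧
      ((w.1 = v.1 + 1 ∧ v.1 % 2 = 0) ∨ (v.1 = w.1 + 1 ∧ w.1 % 2 = 0))))
  symm := ⟨by
    rintro v w ⟨h1, h2⟩
    exact ⟨fun h => h1 h.symm, by tauto⟩⟩
  loopless := ⟨by rintro v ⟨h1, _⟩; exact h1 rfl⟩

/-- Proposition 1.8, expansion step: with δ ∈ (0, 1/6), m = ⌊δn/2⌋, M = 2(m+n) and
κ = δ/8, every vertex set J with |J| ≤ M/2 satisfies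
|∂(J)| − (1−δ)|Con(J)| ≥ κ|J|. -/
theorem stmt16 (δ : ℝ) (hδ0 : 0 < δ) (hδ1 : δ < 1 / 6) (n m : ℕ) (hn : 0 < n)
    (hm : m = ⌊δ * n / 2⌋₊) (κ : ℝ) (hκ : κ = δ / 8)
    (J : Finset (Fin (2 * (m + n)))) (hJ : J.card ≤ m + n) :
    κ * (J.card : ℝ) ≤
      (({i : Fin (2 * (m + n)) | i ∉ J ∧ ∃ j ∈ J, (periGraph n m).Adj j i}.ncard : ℝ))
        - (1 - δ) * (Nat.card ((periGraph n m).induce (J : Set (Fin (2 * (m + n))))).ConnectedComponent : ℝ) := by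
  subst hκ
  have hmR : (m : ℝ) ≤ δ * n / 2 := by
    rw [hm]; exact Nat.floor_le (by positivity)
  have hnR : (1 : ℝ) ≤ n := by exact_mod_cast hn
  rcases J.eq_empty_or_nonempty with rfl | hne
  · haveI : IsEmpty ((∅ : Finset (Fin (2 * (m + n)))) : Set (Fin (2 * (m + n)))) := by
      simp
    haveI : IsEmpty ((periGraph n m).induce ((∅ : Finset (Fin (2 * (m + n)))) : Set (Fin (2 * (m + n))))).ConnectedComponent := by
      constructor
      exact fun c => c.ind (fun v => isEmptyElim v)
    simp [Nat.card_of_isEmpty]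
  by_cases hc : ∃ j ∈ J, (j : Fin (2 * (m + n))).1 < n
  · -- J meets the center
    obtain ⟨j₀, hj₀J, hj₀n⟩ := hc
    have hbd : {i : Fin (2 * (m + n)) | i ∉ J ∧ ∃ j ∈ J, (periGraph n m).Adj j i}
        = ↑(Jᶜ) := by
      ext i
      simp only [Set.mem_setOf_eq, Finset.coe_compl, Set.mem_compl_iff, Finset.mem_coe]
      constructor
      · exact fun h => h.1
      · intro hi
        exact ⟨hi, j₀, hj₀J, ⟨fun h => hi (h ▸ hj₀J), Or.inl hj₀n⟩⟩
    have hcomp : Nat.card ((periGraph n m).induce (J : Set (Fin (2 * (m + n))))).ConnectedComponent = 1 := by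
      set G' := (periGraph n m).induce (J : Set (Fin (2 * (m + n))))
      have hj₀' : j₀ ∈ (J : Set (Fin (2 * (m + n)))) := hj₀J
      have hreach : ∀ u : (J : Set (Fin (2 * (m + n)))), G'.Reachable u ⟨j₀, hj₀'⟩ := by
        intro u
        by_cases hu : u = ⟨j₀, hj₀'⟩
        · exact hu ▸ SimpleGraph.Reachable.refl _
        · refine SimpleGraph.Adj.reachable ?_
          exact ⟨fun h => hu (Subtype.ext h), Or.inr (Or.inl hj₀n)⟩
      have hpre : G'.Preconnected := fun u v => (hreach u).trans (hreach v).symm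
      haveI := hpre.subsingleton_connectedComponent
      haveI : Nonempty G'.ConnectedComponent :=
        ⟨G'.connectedComponentMk ⟨j₀, hj₀'⟩⟩
      exact Nat.card_unique
    rw [hbd, hcomp, Set.ncard_coe_finset, Finset.card_compl, Fintype.card_fin]
    have hJM : J.card ≤ 2 * (m + n) := hJ.trans (by omega)
    rw [Nat.cast_sub hJM]
    have hcR : (J.card : ℝ) ≤ (m : ℝ) + n := by exact_mod_cast hJ
    have h2 : ((2 * (m + n) : ℕ) : ℝ) = 2 * ((m : ℝ) + n) := by push_cast; ring
    rw [h2]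
    nlinarith [Nat.cast_nonneg (α := ℝ) J.card, Nat.cast_nonneg (α := ℝ) m]
  · -- J avoids the center
    push_neg at hc
    obtain ⟨j₀, hj₀J⟩ := hne
    have hnM : n < 2 * (m + n) := by omega
    set b : Fin (2 * (m + n)) := ⟨n, hnM⟩ with hb
    have hsub : (↑(Finset.Iio b) : Set (Fin (2 * (m + n)))) ⊆
        {i : Fin (2 * (m + n)) | i ∉ J ∧ ∃ j ∈ J, (periGraph n m).Adj j i} := by
      intro i hi
      simp only [Finset.coe_Iio, Set.mem_Iio] at hi
      have hin : i.1 < n := hi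
      have hiJ : i ∉ J := fun h => absurd (hc i h) (not_le.mpr hin)
      refine ⟨hiJ, j₀, hj₀J, ?_, Or.inr (Or.inl hin)⟩
      intro h
      exact absurd (hc j₀ hj₀J) (not_le.mpr (h ▸ hin))
    have hbd : (n : ℝ) ≤
        ({i : Fin (2 * (m + n)) | i ∉ J ∧ ∃ j ∈ J, (periGraph n m).Adj j i}.ncard : ℝ) := by
      have := Set.ncard_le_ncard hsub (Set.toFinite _)
      rw [Set.ncard_coe_finset, Fin.card_Iio] at this
      exact_mod_cast this
    have hcomp : Nat.card ((periGraph n m).induce (J : Set (Fin (2 * (m + n))))).ConnectedComponent ≤ J.card := by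
      have hsurj := Nat.card_le_card_of_surjective
        (((periGraph n m).induce (J : Set (Fin (2 * (m + n))))).connectedComponentMk)
        (Quot.mk_surjective)
      rwa [Nat.card_coe_set_eq, Set.ncard_coe_finset] at hsurj
    have hcompR : (Nat.card ((periGraph n m).induce (J : Set (Fin (2 * (m + n))))).ConnectedComponent : ℝ) ≤ J.card := by
      exact_mod_cast hcomp
    have hcR : (J.card : ℝ) ≤ (m : ℝ) + n := by exact_mod_cast hJ
    have hδ' : (0 : ℝ) < 1 - δ := by linarith
    nlinarith [Nat.cast_nonneg (α := ℝ) J.card,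
      Nat.cast_nonneg (α := ℝ)
        (Nat.card ((periGraph n m).induce (J : Set (Fin (2 * (m + n))))).ConnectedComponent)]
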